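/- Let φ be an H-model in a finite simple graph G and let B be a biconnected component of H. Then the induced subgraph G[φ(V(B))], where φ(V(B)) denotes the union of the branch sets φ(v) over v ∈ V(B), contains a biconnected subgraph on at least |V(B)| vertices. -/

import Mathlib

/-- An `H`-model in `G`: branch sets `φ v ⊆ V(G)` inducing connected subgraphs,
pairwise disjoint, with an edge of `G` between the branch sets of adjacent vertices of `H`. -/
def IsMinorModel {V W : Type*} (G : SimpleGraph V) (H : SimpleGraph W)
    (φ : W → Set V) : Prop :=
  (∀ v : W, (G.induce (φ v)).Connected) ∧
  (∀ u v : W, H.Adj u v → ∃ u' ∈ φ u, ∃ v' ∈ φ v, G.Adj u' v') ∧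
  (∀ u v : W, u ≠ v → Disjoint (φ u) (φ v))

/-- `H` is a minor of `G` (`H ⪯ G`) if an `H`-model in `G` exists. -/
def IsMinorOf {V W : Type*} (H : SimpleGraph W) (G : SimpleGraph V) : Prop :=
  ∃ φ : W → Set V, IsMinorModel G H φ

/-- A cut vertex: a vertex whose removal increases the number of connected components. -/
def IsCutVertex {U : Type*} (K : SimpleGraph U) (v : U) : Prop :=
  Nat.card K.ConnectedComponent < Nat.card ((K.induce {u | u ≠ v}).ConnectedComponent)

/-- A graph is biconnected when it is connected and contains no cut vertex. -/
def IsBiconnected {U : Type*} (K : SimpleGraph U) : Prop :=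
  K.Connected ∧ ∀ v : U, ¬ IsCutVertex K v

section StmtFiveAux
open SimpleGraph
variable {V W : Type*} {G : SimpleGraph V} {H : SimpleGraph W}



/-- Connectivity within a vertex set: a walk whose support stays in `s`. -/
def Conn (G : SimpleGraph V) (s : Set V) (a b : V) : Prop :=
  ∃ w : G.Walk a b, ∀ x ∈ w.support, x ∈ s

namespace Conn

lemma mem_left {s : Set V} {a b : V} (h : Conn G s a b) : a ∈ s := by
  obtain ⟨w, hw⟩ := h; exact hw a w.start_mem_support

lemma mem_right {s : Set V} {a b : V} (h : Conn G s a b) : b ∈ s := by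
  obtain ⟨w, hw⟩ := h; exact hw b w.end_mem_support

lemma refl {s : Set V} {a : V} (ha : a ∈ s) : Conn G s a a :=
  ⟨Walk.nil, by simp [ha]⟩

lemma symm {s : Set V} {a b : V} (h : Conn G s a b) : Conn G s b a := by
  obtain ⟨w, hw⟩ := h
  exact ⟨w.reverse, fun x hx => hw x (by simpa [Walk.support_reverse] using hx)⟩

lemma trans {s : Set V} {a b c : V} (h1 : Conn G s a b) (h2 : Conn G s b c) :
    Conn G s a c := by
  obtain ⟨w1, hw1⟩ := h1
  obtain ⟨w2, hw2⟩ := h2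
  refine ⟨w1.append w2, fun x hx => ?_⟩
  rw [Walk.support_append] at hx
  rcases List.mem_append.mp hx with h | h
  · exact hw1 x h
  · exact hw2 x (List.mem_of_mem_tail h)

lemma mono {s t : Set V} (hst : s ⊆ t) {a b : V} (h : Conn G s a b) : Conn G t a b := by
  obtain ⟨w, hw⟩ := h; exact ⟨w, fun x hx => hst (hw x hx)⟩

end Conn

lemma conn_of_adj {s : Set V} {a b : V} (h : G.Adj a b) (ha : a ∈ s) (hb : b ∈ s) :
    Conn G s a b := by
  refine ⟨Walk.cons h Walk.nil, fun x hx => ?_⟩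
  simp only [Walk.support_cons, Walk.support_nil, List.mem_cons, List.mem_singleton] at hx
  rcases hx with rfl | hx
  · exact ha
  · simp at hx; subst hx; exact hb

lemma conn_of_reachable {s : Set V} {a b : ↥s} (h : (G.induce s).Reachable a b) :
    Conn G s ↑a ↑b := by
  obtain ⟨w⟩ := h
  induction w with
  | nil => exact Conn.refl (Subtype.coe_prop _)
  | @cons p q r hadj w ih =>
      have hadj' : G.Adj ↑p ↑q := hadj
      exact (conn_of_adj hadj' p.2 q.2).trans ih



lemma reachable_of_conn {s : Set V} :
    ∀ {a b : V} (w : G.Walk a b), (∀ x ∈ w.support, x ∈ s) →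
    ∀ (ha : a ∈ s) (hb : b ∈ s), (G.induce s).Reachable ⟨a, ha⟩ ⟨b, hb⟩ := by
  intro a b w
  induction w with
  | nil => intro _ ha hb; exact Reachable.refl _
  | @cons a c b hadj p ih =>
    intro h ha hb
    have hc : c ∈ s := h c (by simp [Walk.support_cons])
    have hadj' : (G.induce s).Adj ⟨a, ha⟩ ⟨c, hc⟩ := hadj
    exact hadj'.reachable.trans
      (ih (fun x hx => h x (by simp [Walk.support_cons]; exact Or.inr hx)) hc hb)

lemma reachable_map_of_conn {U : Type*} {K : SimpleGraph U} {s : Set V}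
    (f : ↥s → U) (hf : ∀ p q : ↥s, G.Adj ↑p ↑q → K.Adj (f p) (f q))
    {a b : V} (ha : a ∈ s) (hb : b ∈ s) (h : Conn G s a b) :
    K.Reachable (f ⟨a, ha⟩) (f ⟨b, hb⟩) := by
  obtain ⟨w, hw⟩ := h
  have hr := reachable_of_conn w hw ha hb
  exact hr.map ⟨f, fun h' => hf _ _ h'⟩

lemma subsingleton_cc_of_preconnected {U : Type*} {K : SimpleGraph U}
    (h : K.Preconnected) : Subsingleton K.ConnectedComponent :=
  ⟨fun c d => ConnectedComponent.ind₂ (fun u v => ConnectedComponent.sound (h u v)) c d⟩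

lemma preconnected_of_subsingleton {U : Type*} {K : SimpleGraph U}
    (h : Subsingleton K.ConnectedComponent) : K.Preconnected := fun u v =>
  (ConnectedComponent.eq).mp (Subsingleton.elim _ _)

lemma card_cc_eq_one {U : Type*} [Finite U] {K : SimpleGraph U} (h : K.Connected) :
    Nat.card K.ConnectedComponent = 1 := by
  haveI := subsingleton_cc_of_preconnected h.preconnected
  haveI : Nonempty K.ConnectedComponent := Nonempty.map K.connectedComponentMk h.nonempty
  haveI : Unique K.ConnectedComponent := uniqueOfSubsingleton (Classical.arbitrary _)
  exact Nat.card_unique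


def Good (G : SimpleGraph V) (B : H.Subgraph) (φ : W → Set V) : Prop :=
  (∀ v ∈ B.verts, (G.induce (φ v)).Connected) ∧
  (∀ u v : W, B.Adj u v → ∃ a ∈ φ u, ∃ b ∈ φ v, G.Adj a b) ∧
  (∀ u v : W, u ∈ B.verts → v ∈ B.verts → u ≠ v → Disjoint (φ u) (φ v))

lemma conn_branch {B : H.Subgraph} {φ : W → Set V} (good : Good G B φ) {u : W}
    (hu : u ∈ B.verts) {a b : V} (ha : a ∈ φ u) (hb : b ∈ φ u) : Conn G (φ u) a b :=
  conn_of_reachable ((good.1 u hu).preconnected ⟨a, ha⟩ ⟨b, hb⟩)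

lemma conn_union {B : H.Subgraph} {φ : W → Set V} (good : Good G B φ)
    (hc : B.coe.Connected) {u w : W} (hu : u ∈ B.verts) (hw : w ∈ B.verts)
    {a b : V} (ha : a ∈ φ u) (hb : b ∈ φ w) : Conn G (⋃ v ∈ B.verts, φ v) a b := by
  have hsub : ∀ x, x ∈ B.verts → φ x ⊆ ⋃ v ∈ B.verts, φ v :=
    fun x hx => Set.subset_biUnion_of_mem hx
  suffices h : ∀ (p q : B.verts) (wk : B.coe.Walk p q) (a b : V),
      a ∈ φ ↑p → b ∈ φ ↑q → Conn G (⋃ v ∈ B.verts, φ v) a b by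
    exact h ⟨u, hu⟩ ⟨w, hw⟩ (hc.preconnected ⟨u, hu⟩ ⟨w, hw⟩).some a b ha hb
  intro p q wk
  induction wk with
  | @nil p => intro a b ha hb
              exact (conn_branch good (Subtype.coe_prop _) ha hb).mono (hsub _ (Subtype.coe_prop _))
  | @cons p r q hadj wk ih =>
    intro a b ha hb
    have hadj' : B.Adj ↑p ↑r := hadj
    obtain ⟨a₂, ha₂, b₂, hb₂, hab⟩ := good.2.1 ↑p ↑r hadj'
    exact ((conn_branch good p.2 ha ha₂).mono (hsub _ p.2)).trans
      ((conn_of_adj hab (hsub _ p.2 ha₂) (hsub _ r.2 hb₂)).trans (ih b₂ b hb₂ hb))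

lemma conn_union_del {B : H.Subgraph} {φ : W → Set V} (good : Good G B φ) {v : W}
    (hv : v ∈ B.verts)
    (hpre : (B.coe.induce {u | u ≠ (⟨v, hv⟩ : B.verts)}).Preconnected)
    {s : Set V} (hs : ∀ u, u ∈ B.verts → u ≠ v → φ u ⊆ s)
    {u w : W} (hu : u ∈ B.verts) (hw : w ∈ B.verts) (huv : u ≠ v) (hwv : w ≠ v)
    {a b : V} (ha : a ∈ φ u) (hb : b ∈ φ w) : Conn G s a b := by
  suffices h : ∀ (p q : {x : B.verts // x ∈ {u | u ≠ (⟨v, hv⟩ : B.verts)}})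
      (wk : (B.coe.induce {u | u ≠ (⟨v, hv⟩ : B.verts)}).Walk p q) (a b : V),
      a ∈ φ ↑↑p → b ∈ φ ↑↑q → Conn G s a b by
    refine h ⟨⟨u, hu⟩, fun hh => huv (congrArg Subtype.val hh)⟩
      ⟨⟨w, hw⟩, fun hh => hwv (congrArg Subtype.val hh)⟩ (hpre _ _).some a b ha hb
  intro p q wk
  induction wk with
  | @nil p =>
    intro a b ha hb
    have hp : (↑(↑p : B.verts) : W) ≠ v := fun hh => p.2 (Subtype.ext hh)
    exact (conn_branch good (Subtype.coe_prop _) ha hb).mono (hs _ (Subtype.coe_prop _) hp)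
  | @cons p r q hadj wk ih =>
    intro a b ha hb
    have hadj' : B.Adj ↑↑p ↑↑r := hadj
    obtain ⟨a₂, ha₂, b₂, hb₂, hab⟩ := good.2.1 _ _ hadj'
    have hp : (↑(↑p : B.verts) : W) ≠ v := fun hh => p.2 (Subtype.ext hh)
    have hr : (↑(↑r : B.verts) : W) ≠ v := fun hh => r.2 (Subtype.ext hh)
    exact ((conn_branch good (Subtype.coe_prop _) ha ha₂).mono (hs _ (Subtype.coe_prop _) hp)).trans
      ((conn_of_adj hab (hs _ (Subtype.coe_prop _) hp ha₂) (hs _ (Subtype.coe_prop _) hr hb₂)).trans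
        (ih b₂ b hb₂ hb))


lemma seg {s t A : Set V} {x : V} (hx : x ∈ t)
    (hts : ∀ z ∈ t, z ≠ x → z ∈ s)
    (hclose : ∀ p q : V, p ∈ A → q ∈ s → G.Adj p q → q ∈ A)
    (hconn : ∀ p q : V, p ∈ A → Conn G s p q → q ∈ A) :
    ∀ {y z : V} (w : G.Walk y z), (∀ m ∈ w.support, m ∈ t) → z ∈ A ∪ {x} →
      (x ∈ w.support → Conn G (t ∩ (A ∪ {x})) x z) ∧
      (y ∈ A ∪ {x} → Conn G (t ∩ (A ∪ {x})) y z) := by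
  intro y z w
  induction w with
  | @nil y =>
    intro hsup hz
    refine ⟨?_, ?_⟩
    · intro hxs
      have hxy : x = y := by simpa [Walk.support_nil] using hxs
      subst hxy
      exact Conn.refl ⟨hx, Or.inr rfl⟩
    · intro _
      exact Conn.refl ⟨hsup y (by simp), hz⟩
  | @cons y d z hadj w' ih =>
    intro hsup hz
    have hdt : d ∈ t := hsup d (by simp)
    have hyt : y ∈ t := hsup y (by simp)
    have hsup' : ∀ m ∈ w'.support, m ∈ t := fun m hm => hsup m (by simp [hm])
    obtain ⟨ih1, ih2⟩ := ih hsup' hz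
    have key : x ∈ (Walk.cons hadj w').support → Conn G (t ∩ (A ∪ {x})) x z := by
      intro hxs
      by_cases hxw : x ∈ w'.support
      · exact ih1 hxw
      · have hxy : x = y := by
          rcases (by simpa [Walk.support_cons] using hxs : x = y ∨ x ∈ w'.support) with h | h
          · exact h
          · exact absurd h hxw
        subst hxy
        by_cases hdA : d ∈ A
        · exact (conn_of_adj (s := t ∩ (A ∪ {x})) hadj ⟨hx, Or.inr rfl⟩ ⟨hdt, Or.inl hdA⟩).trans (ih2 (Or.inl hdA))
        · exfalso
          have hdx : d ≠ x := fun h => hxw (h ▸ w'.start_mem_support)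
          have hzx : z ≠ x := fun h => hxw (h ▸ w'.end_mem_support)
          have hzA : z ∈ A := by
            rcases hz with h | h
            · exact h
            · exact absurd h hzx
          have hzd : Conn G s z d := by
            refine ⟨w'.reverse, fun m hm => ?_⟩
            rw [Walk.support_reverse, List.mem_reverse] at hm
            exact hts m (hsup' m hm) (fun h => hxw (h ▸ hm))
          exact hdA (hconn z d hzA hzd)
    refine ⟨key, ?_⟩
    intro hy
    rcases hy with hyA | hyx
    · by_cases hdx : d = x
      · have hxs : x ∈ (Walk.cons hadj w').support := by
          rw [Walk.support_cons]
          exact List.mem_cons_of_mem _ (hdx ▸ w'.start_mem_support)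
        have h1 : Conn G (t ∩ (A ∪ {x})) y d :=
          conn_of_adj hadj ⟨hyt, Or.inl hyA⟩ ⟨hdt, Or.inr hdx⟩
        exact h1.trans (by rw [hdx]; exact key hxs)
      · have hdA : d ∈ A := hclose y d hyA (hts d hdt hdx) hadj
        exact (conn_of_adj (s := t ∩ (A ∪ {x})) hadj ⟨hyt, Or.inl hyA⟩ ⟨hdt, Or.inl hdA⟩).trans (ih2 (Or.inl hdA))
    · have hyx' : y = x := hyx
      subst hyx'
      exact key (by simp [Walk.support_cons])

lemma reachable_of_conn' {s : Set V} {a b : V} (ha : a ∈ s) (hb : b ∈ s) (h : Conn G s a b) :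
    (G.induce s).Reachable ⟨a, ha⟩ ⟨b, hb⟩ := by
  obtain ⟨w, hw⟩ := h
  exact reachable_of_conn w hw ha hb
lemma key [Fintype V] [Fintype W] (G : SimpleGraph V) {H : SimpleGraph W} (B : H.Subgraph)
    (hBc : B.coe.Connected) (hB2 : ∀ v : B.verts, ¬ IsCutVertex B.coe v) :
    ∀ (n : ℕ) (φ : W → Set V), Good G B φ → (⋃ v ∈ B.verts, φ v).ncard ≤ n →
    ∃ ψ : W → Set V, Good G B ψ ∧ (∀ u, ψ u ⊆ φ u) ∧
      ∀ (x a b : V), a ∈ (⋃ v ∈ B.verts, ψ v) \ {x} → b ∈ (⋃ v ∈ B.verts, ψ v) \ {x} →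
        Conn G ((⋃ v ∈ B.verts, ψ v) \ {x}) a b := by
  intro n
  induction n with
  | zero =>
    intro φ good hcard
    refine ⟨φ, good, fun u => subset_rfl, ?_⟩
    intro x a b ha _
    exfalso
    have : (⋃ v ∈ B.verts, φ v) = ∅ := by
      rw [← Set.ncard_eq_zero (Set.toFinite _)]; omega
    rw [this] at ha
    exact ha.1
  | succ n ih =>
    intro φ good hcard
    classical
    set S := ⋃ v ∈ B.verts, φ v with hS
    by_cases hdone : ∀ (x a b : V), a ∈ S \ {x} →
        b ∈ S \ {x} → Conn G (S \ {x}) a b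
    · exact ⟨φ, good, fun u => subset_rfl, hdone⟩
    push_neg at hdone
    obtain ⟨x, a, b, ha, hb, hnc⟩ := hdone
    obtain ⟨ua, hua, ha'⟩ : ∃ u ∈ B.verts, a ∈ φ u := by
      have := ha.1; rw [hS] at this; simpa using this
    obtain ⟨ub, hub, hb'⟩ : ∃ u ∈ B.verts, b ∈ φ u := by
      have := hb.1; rw [hS] at this; simpa using this
    have hxS : x ∈ S := by
      by_contra hxS
      refine hnc (Conn.mono (s := S) (t := S \ {x})
        (fun y hy => ⟨hy, fun h => hxS (by rwa [(h : y = x)] at hy)⟩) ?_)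
      rw [hS]
      exact conn_union good hBc hua hub ha' hb'
    obtain ⟨v, hv, hxv⟩ : ∃ v ∈ B.verts, x ∈ φ v := by
      rw [hS] at hxS; simpa using hxS
    -- B minus v is preconnected
    have hpre : (B.coe.induce {u | u ≠ (⟨v, hv⟩ : B.verts)}).Preconnected := by
      have h1 : Nat.card B.coe.ConnectedComponent = 1 := card_cc_eq_one hBc
      have h2 := hB2 ⟨v, hv⟩
      unfold IsCutVertex at h2
      rw [h1] at h2
      exact preconnected_of_subsingleton
        (Finite.card_le_one_iff_subsingleton.mp (Nat.not_lt.mp h2))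
    have hsubS : ∀ u, u ∈ B.verts → φ u ⊆ S := fun u hu => Set.subset_biUnion_of_mem hu
    have hsub : ∀ u, u ∈ B.verts → u ≠ v → φ u ⊆ S \ {x} := by
      intro u hu hne y hy
      refine ⟨hsubS u hu hy, fun h => ?_⟩
      have : y = x := h
      exact (good.2.2 u v hu hv hne).le_bot ⟨hy, this ▸ hxv⟩
    obtain ⟨y₀, hy₀, hclaim⟩ : ∃ y₀, y₀ ∈ S \ {x} ∧ ∀ u, u ∈ B.verts → u ≠ v →
        φ u ⊆ {y | y ∈ S \ {x} ∧ Conn G (S \ {x}) y₀ y} := by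
      by_cases hex : ∃ u ∈ B.verts, u ≠ v
      · obtain ⟨u₀, hu₀, hne₀⟩ := hex
        obtain ⟨y₀, hy₀⟩ : (φ u₀).Nonempty :=
          Set.nonempty_coe_sort.mp (good.1 u₀ hu₀).nonempty
        refine ⟨y₀, hsub u₀ hu₀ hne₀ hy₀, ?_⟩
        intro u hu hne y hy
        exact ⟨hsub u hu hne hy, conn_union_del good hv hpre hsub hu₀ hu hne₀ hne hy₀ hy⟩
      · push_neg at hex
        exact ⟨a, ha, fun u hu hne => absurd (hex u hu) hne⟩
    set A : Set V := {y | y ∈ S \ {x} ∧ Conn G (S \ {x}) y₀ y} with hA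
    have hclose : ∀ p q : V, p ∈ A → q ∈ S \ {x} → G.Adj p q → q ∈ A :=
      fun p q hp hq hadj => ⟨hq, hp.2.trans (conn_of_adj hadj hp.1 hq)⟩
    have hconnA : ∀ p q : V, p ∈ A → Conn G (S \ {x}) p q → q ∈ A :=
      fun p q hp h => ⟨h.mem_right, hp.2.trans h⟩
    have hAx : x ∉ A := fun h => h.1.2 rfl
    -- witness of strict decrease
    obtain ⟨c, hcS, hcA⟩ : ∃ c, c ∈ S \ {x} ∧ c ∉ A := by
      by_contra h
      push_neg at h
      exact hnc (((h a ha).2).symm.trans ((h b hb).2))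
    -- the shrunk model
    set ψ : W → Set V := fun u => if u = v then φ v ∩ (A ∪ {x}) else φ u with hψdef
    have hψv : ψ v = φ v ∩ (A ∪ {x}) := if_pos rfl
    have hψu : ∀ u, u ≠ v → ψ u = φ u := fun u h => if_neg h
    have hψ_sub : ∀ u, ψ u ⊆ φ u := by
      intro u
      by_cases h : u = v
      · subst h; rw [hψv]; exact Set.inter_subset_left
      · rw [hψu u h]
    have hxψ : x ∈ ψ v := by rw [hψv]; exact ⟨hxv, Or.inr rfl⟩
    have hts : ∀ z ∈ φ v, z ≠ x → z ∈ S \ {x} := fun z hz hzx => ⟨hsubS v hv hz, hzx⟩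
    have connx : ∀ y ∈ ψ v, Conn G (ψ v) y x := by
      intro y hy
      rw [hψv] at hy ⊢
      rcases eq_or_ne y x with rfl | hyx
      · exact Conn.refl hy
      · obtain ⟨w, hw⟩ := conn_branch good hv hy.1 hxv
        exact (seg hxv hts hclose hconnA w hw (Or.inr rfl)).2 hy.2
    have goodψ : Good G B ψ := by
      refine ⟨?_, ?_, ?_⟩
      · intro u hu
        by_cases huv : u = v
        · subst huv
          rw [connected_iff]
          refine ⟨?_, ⟨⟨x, hxψ⟩⟩⟩
          rintro ⟨y, hy⟩ ⟨z, hz⟩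
          exact reachable_of_conn' hy hz ((connx y hy).trans (connx z hz).symm)
        · rw [hψu u huv]; exact good.1 u hu
      · intro u₁ u₂ hadj
        have h1 : u₁ ∈ B.verts := B.edge_vert hadj
        have h2 : u₂ ∈ B.verts := B.edge_vert hadj.symm
        have hne12 : u₁ ≠ u₂ := (B.adj_sub hadj).ne
        obtain ⟨a', ha'', b', hb'', hab⟩ := good.2.1 u₁ u₂ hadj
        have into : ∀ (u' : W) (c d : V), u' ∈ B.verts → u' ≠ v → c ∈ φ v → d ∈ φ u' →
            G.Adj c d → c ∈ ψ v := by
          intro u' c d hu' hne hc hd hcd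
          rw [hψv]
          refine ⟨hc, ?_⟩
          rcases eq_or_ne c x with rfl | hcx
          · exact Or.inr rfl
          · exact Or.inl (hclose d c (hclaim u' hu' hne hd) ⟨hsubS v hv hc, hcx⟩ hcd.symm)
        by_cases h1v : u₁ = v
        · have h2v : u₂ ≠ v := fun h => hne12 (h1v.trans h.symm)
          refine ⟨a', ?_, b', ?_, hab⟩
          · rw [h1v] at ha'' ⊢
            exact into u₂ a' b' h2 h2v ha'' hb'' hab
          · rw [hψu u₂ h2v]; exact hb''
        · by_cases h2v : u₂ = v
          · refine ⟨a', ?_, b', ?_, hab⟩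
            · rw [hψu u₁ h1v]; exact ha''
            · rw [h2v] at hb'' ⊢
              exact into u₁ b' a' h1 h1v hb'' ha'' hab.symm
          · refine ⟨a', ?_, b', ?_, hab⟩
            · rw [hψu u₁ h1v]; exact ha''
            · rw [hψu u₂ h2v]; exact hb'' 
      · intro u₁ u₂ h1 h2 hne
        exact (good.2.2 u₁ u₂ h1 h2 hne).mono (hψ_sub u₁) (hψ_sub u₂)
    set T := ⋃ v ∈ B.verts, ψ v with hT
    have hTS : T ⊆ S := by
      rw [hT, hS]; exact Set.iUnion₂_mono fun u _ => hψ_sub u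
    have hTA : T ⊆ A ∪ {x} := by
      intro y hy
      rw [hT] at hy
      obtain ⟨u, hu, hyu⟩ : ∃ u ∈ B.verts, y ∈ ψ u := by simpa using hy
      by_cases huv : u = v
      · subst huv; rw [hψv] at hyu; exact hyu.2
      · rw [hψu u huv] at hyu; exact Or.inl (hclaim u hu huv hyu)
    have hcT : c ∉ T := fun h => by
      rcases hTA h with h' | h'
      · exact hcA h'
      · exact hcS.2 h'
    have hlt : T.ncard < S.ncard :=
      Set.ncard_lt_ncard ((Set.ssubset_iff_of_subset hTS).mpr ⟨c, hcS.1, hcT⟩) (Set.toFinite S)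
    obtain ⟨ψ', good', sub', P⟩ := ih ψ goodψ (by rw [← hT]; omega)
    exact ⟨ψ', good', fun u => (sub' u).trans (hψ_sub u), P⟩

end StmtFiveAux

/-- If `φ` is an `H`-model in `G` and `B` is a biconnected component of `H` (a maximal
biconnected subgraph of `H`), then `G[φ(V(B))]` contains a biconnected subgraph on at
least `|V(B)|` vertices. -/
theorem stmt_5 {V W : Type*} [Fintype V] [Fintype W]
    (G : SimpleGraph V) (H : SimpleGraph W)
    (φ : W → Set V) (hφ : IsMinorModel G H φ)
    (B : H.Subgraph) (hB : IsBiconnected B.coe)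
    (hmax : ∀ B' : H.Subgraph, B ≤ B' → IsBiconnected B'.coe → B' = B) :
    ∃ D : G.Subgraph, D.verts ⊆ (⋃ v ∈ B.verts, φ v) ∧
      B.verts.ncard ≤ D.verts.ncard ∧ IsBiconnected D.coe := by
  classical
  obtain ⟨hBc, hB2⟩ := hB
  have good : Good G B φ :=
    ⟨fun v _ => hφ.1 v, fun u v h => hφ.2.1 u v (B.adj_sub h),
     fun u v _ _ h => hφ.2.2 u v h⟩
  obtain ⟨ψ, goodψ, hsub, P⟩ := key G B hBc hB2 (⋃ v ∈ B.verts, φ v).ncard φ good le_rfl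
  set T := ⋃ v ∈ B.verts, ψ v with hT
  have hTS : T ⊆ ⋃ v ∈ B.verts, φ v := Set.iUnion₂_mono fun u _ => hsub u
  let D : G.Subgraph :=
    { verts := T
      Adj := fun a b => G.Adj a b ∧ a ∈ T ∧ b ∈ T
      adj_sub := fun h => h.1
      edge_vert := fun h => h.2.1
      symm := ⟨fun a b h => ⟨h.1.symm, h.2.2, h.2.1⟩⟩ }
  have hDverts : D.verts = T := rfl
  -- branch sets nonempty
  have hne_branch : ∀ u ∈ B.verts, (ψ u).Nonempty := fun u hu =>
    Set.nonempty_coe_sort.mp (goodψ.1 u hu).nonempty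
  have hBne : B.verts.Nonempty := Set.nonempty_coe_sort.mp hBc.nonempty
  haveI hVne : Nonempty V := ⟨(hne_branch _ hBne.some_mem).some⟩
  -- global connectivity of T
  have connT : ∀ y ∈ T, ∀ z ∈ T, Conn G T y z := by
    intro y hy z hz
    obtain ⟨u, hu, hyu⟩ : ∃ u ∈ B.verts, y ∈ ψ u := by rw [hT] at hy; simpa using hy
    obtain ⟨w, hw, hzw⟩ : ∃ u ∈ B.verts, z ∈ ψ u := by rw [hT] at hz; simpa using hz
    rw [hT]
    exact conn_union goodψ hBc hu hw hyu hzw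
  have hTne : T.Nonempty := ⟨_, Set.mem_biUnion hBne.some_mem (hne_branch _ hBne.some_mem).some_mem⟩
  have Dconn : D.coe.Connected := by
    rw [SimpleGraph.connected_iff]
    refine ⟨?_, ⟨⟨hTne.some, hTne.some_mem⟩⟩⟩
    rintro ⟨y, hy⟩ ⟨z, hz⟩
    exact reachable_map_of_conn (K := D.coe) (s := T) (fun p => ⟨↑p, p.2⟩)
      (fun p q h => ⟨h, p.2, q.2⟩) hy hz (connT y hy z hz)
  refine ⟨D, hTS, ?_, Dconn, ?_⟩
  · -- cardinality
    let f : W → V := fun u => if h : u ∈ B.verts then (hne_branch u h).choose else hVne.some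
    have hf1 : ∀ u ∈ B.verts, f u ∈ ψ u := by
      intro u hu
      simp only [f, dif_pos hu]
      exact (hne_branch u hu).choose_spec
    refine Set.ncard_le_ncard_of_injOn f (fun u hu => ?_) ?_ (Set.toFinite T)
    · exact Set.mem_biUnion hu (hf1 u hu)
    · intro u₁ h1 u₂ h2 heq
      by_contra hne
      exact (goodψ.2.2 u₁ u₂ h1 h2 hne).le_bot ⟨hf1 u₁ h1, heq ▸ hf1 u₂ h2⟩ |>.elim
  · -- no cut vertex
    intro p
    unfold IsCutVertex
    rw [card_cc_eq_one Dconn]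
    refine Nat.not_lt.mpr (Finite.card_le_one_iff_subsingleton.mpr ?_)
    apply subsingleton_cc_of_preconnected
    rintro ⟨⟨y, hyT⟩, hyp⟩ ⟨⟨z, hzT⟩, hzp⟩
    have hy' : y ∈ T \ {(↑p : V)} := ⟨hyT, fun h => hyp (Subtype.ext (h : y = ↑p))⟩
    have hz' : z ∈ T \ {(↑p : V)} := ⟨hzT, fun h => hzp (Subtype.ext (h : z = ↑p))⟩
    have hconn := P ↑p y z hy' hz'
    exact reachable_map_of_conn (K := D.coe.induce {u | u ≠ p}) (s := T \ {(↑p : V)})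
      (fun q => ⟨⟨↑q, q.2.1⟩, fun h => q.2.2 (congrArg Subtype.val h)⟩)
      (fun q r h => ⟨h, q.2.1, r.2.1⟩) hy' hz' hconn
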